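/- Let U be a unitary operator that finitely propagates with constant b > 0 with respect to a nonnegative self-adjoint operator A, and let δ > 0. Define Λ(r) := Σ_{n=1}^∞ δnb·1_{[(n−1)b, nb)}(r) for r ≥ 0. Then for any R > 0, the operator e^{Λ(A)}[U, E_A([R,∞))] is bounded with operator norm at most e^{δ⌈R+b⌉_b} + e^{δ⌈R⌉_b}, where ⌈x⌉_b := b·min{n ∈ ℕ : x ≤ nb}. -/

import Mathlib

noncomputable section

/-- A projection-valued measure on subsets of `α`, acting on a complex Hilbert space `H`. -/
structure PVM (α : Type*) (H : Type*) [NormedAddCommGroup H] [InnerProductSpace ℂ H]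
    [CompleteSpace H] where
  proj : Set α → H →L[ℂ] H
  selfAdj : ∀ S, ContinuousLinearMap.adjoint (proj S) = proj S
  inter : ∀ S T, proj S ∘L proj T = proj (S ∩ T)
  empty : proj ∅ = 0
  univ : proj Set.univ = 1
  countablyAdditive : ∀ f : ℕ → Set α, (Pairwise fun m n => Disjoint (f m) (f n)) →
    ∀ ψ : H, HasSum (fun n => proj (f n) ψ) (proj (⋃ n, f n) ψ)

/-- `U` finitely propagates with constant `b` with respect to the spectral measure `E`:
it maps the spectral subspace of `[R₁, R₂)` into that of `[R₁ - b, R₂ + b)`. -/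
def FinitePropagation {H : Type*} [NormedAddCommGroup H] [InnerProductSpace ℂ H]
    [CompleteSpace H] (U : H →L[ℂ] H) (E : PVM ℝ H) (b : ℝ) : Prop :=
  ∀ R₁ R₂ : ℝ, R₁ < R₂ → ∀ ψ : H, E.proj (Set.Ico R₁ R₂) ψ = ψ →
    E.proj (Set.Ico (R₁ - b) (R₂ + b)) (U ψ) = U ψ

/-- The truncated step operator `e^{Λ_N(A)} = Σ_{n=1}^N e^{δnb} E_A(B_n) + e^{δNb} E_A([Nb,∞))`,
where `B_n = [(n-1)b, nb)`. For `c = δ` this is `e^{Λ_N(A)}`, for `c = -δ` it is `e^{-Λ_N(A)}`. -/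
def expLamN {H : Type*} [NormedAddCommGroup H] [InnerProductSpace ℂ H] [CompleteSpace H]
    (E : PVM ℝ H) (c b : ℝ) (N : ℕ) : H →L[ℂ] H :=
  (∑ n ∈ Finset.Icc 1 N,
      Real.exp (c * n * b) • E.proj (Set.Ico (((n : ℝ) - 1) * b) ((n : ℝ) * b)))
    + Real.exp (c * N * b) • E.proj (Set.Ici ((N : ℝ) * b))

/-- `⌈x⌉_b := b ⋅ min {n ∈ ℕ : x ≤ n b}`. -/
def bceil (b x : ℝ) : ℝ := b * (⌈x / b⌉₊ : ℝ)


set_option linter.unusedSectionVars false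
set_option linter.unusedVariables false
set_option maxHeartbeats 1000000

open scoped ComplexInnerProductSpace

namespace PVM
variable {H : Type*} [NormedAddCommGroup H] [InnerProductSpace ℂ H] [CompleteSpace H]
  (E : PVM ℝ H)

lemma proj_proj (S T : Set ℝ) (ψ : H) :
    E.proj S (E.proj T ψ) = E.proj (S ∩ T) ψ := by
  rw [← E.inter]; rfl

lemma idem (S : Set ℝ) (ψ : H) : E.proj S (E.proj S ψ) = E.proj S ψ := by
  rw [E.proj_proj, Set.inter_self]

lemma restrict {S T : Set ℝ} {ψ : H} (h : E.proj T ψ = ψ) :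
    E.proj S ψ = E.proj (S ∩ T) ψ := by
  conv_lhs => rw [← h]
  rw [E.proj_proj]

lemma norm_proj_le (S : Set ℝ) (ψ : H) : ‖E.proj S ψ‖ ≤ ‖ψ‖ := by
  have h1 : ⟪E.proj S ψ, E.proj S ψ⟫ = ⟪ψ, E.proj S ψ⟫ := by
    rw [← ContinuousLinearMap.adjoint_inner_right (E.proj S) ψ (E.proj S ψ), E.selfAdj, E.idem]
  have h2 : ‖E.proj S ψ‖ ^ 2 ≤ ‖E.proj S ψ‖ * ‖ψ‖ := by
    calc ‖E.proj S ψ‖ ^ 2 = RCLike.re ⟪E.proj S ψ, E.proj S ψ⟫ :=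
          (inner_self_eq_norm_sq _).symm
      _ = RCLike.re ⟪ψ, E.proj S ψ⟫ := by rw [h1]
      _ ≤ |RCLike.re (⟪ψ, E.proj S ψ⟫ : ℂ)| := le_abs_self _
      _ ≤ ‖(⟪ψ, E.proj S ψ⟫ : ℂ)‖ := RCLike.abs_re_le_norm _
      _ ≤ ‖ψ‖ * ‖E.proj S ψ‖ := norm_inner_le_norm _ _
      _ = ‖E.proj S ψ‖ * ‖ψ‖ := mul_comm _ _
  rcases eq_or_lt_of_le (norm_nonneg (E.proj S ψ)) with h | h
  · rw [← h]; exact norm_nonneg ψ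
  · nlinarith
end PVM

namespace PVM
variable {H : Type*} [NormedAddCommGroup H] [InnerProductSpace ℂ H] [CompleteSpace H]
  (E : PVM ℝ H)

lemma orth {S T : Set ℝ} (h : Disjoint S T) (ψ φ : H) :
    ⟪E.proj S ψ, E.proj T φ⟫ = 0 := by
  conv_lhs => rw [← E.selfAdj T]
  rw [ContinuousLinearMap.adjoint_inner_right, E.proj_proj, Set.inter_comm,
    Set.disjoint_iff_inter_eq_empty.mp h, E.empty]
  simp

lemma add_of_disjoint {S T : Set ℝ} (h : Disjoint S T) (ψ : H) :
    E.proj (S ∪ T) ψ = E.proj S ψ + E.proj T ψ := by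
  classical
  set f : ℕ → Set ℝ := fun n => if n = 0 then S else if n = 1 then T else ∅ with hf
  have hdisj : Pairwise fun m n => Disjoint (f m) (f n) := by
    intro m n hmn
    simp only [hf]
    split_ifs <;> first | omega | exact h | exact h.symm | simp
  have h1 := E.countablyAdditive f hdisj ψ
  have hunion : (⋃ n, f n) = S ∪ T := by
    apply Set.Subset.antisymm
    · refine Set.iUnion_subset fun n => ?_
      rcases eq_or_ne n 0 with rfl | hn0
      · simp [hf]
      rcases eq_or_ne n 1 with rfl | hn1
      · simp [hf]
      · simp [hf, hn0, hn1]
    · intro x hx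
      rcases hx with hx | hx
      · exact Set.mem_iUnion.mpr ⟨0, by simpa [hf] using hx⟩
      · exact Set.mem_iUnion.mpr ⟨1, by simpa [hf] using hx⟩
  rw [hunion] at h1
  have h2 : HasSum (fun n => E.proj (f n) ψ) (E.proj S ψ + E.proj T ψ) := by
    have h3 : ∀ n ∉ ({0, 1} : Finset ℕ), E.proj (f n) ψ = 0 := by
      intro n hn
      simp only [Finset.mem_insert, Finset.mem_singleton, not_or] at hn
      simp [hf, hn.1, hn.2, E.empty]
    have : HasSum (fun n => E.proj (f n) ψ) (∑ n ∈ ({0, 1} : Finset ℕ), E.proj (f n) ψ) :=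
      hasSum_sum_of_ne_finset_zero h3
    simpa [hf, Finset.sum_pair (by norm_num : (0:ℕ) ≠ 1)] using this
  exact h1.unique h2

lemma finset_additive {ι : Type*} (s : Finset ι) (f : ι → Set ℝ)
    (hdisj : ∀ i ∈ s, ∀ j ∈ s, i ≠ j → Disjoint (f i) (f j)) (ψ : H) :
    E.proj (⋃ i ∈ s, f i) ψ = ∑ i ∈ s, E.proj (f i) ψ := by
  classical
  induction s using Finset.induction with
  | empty => simp [E.empty]
  | @insert a s' hna ih =>
    rw [Finset.sum_insert hna, ← ih (fun i hi j hj hij =>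
      hdisj i (Finset.mem_insert_of_mem hi) j (Finset.mem_insert_of_mem hj) hij)]
    rw [Finset.set_biUnion_insert, E.add_of_disjoint]
    exact Set.disjoint_iUnion₂_right.mpr fun i hi =>
      hdisj a (Finset.mem_insert_self a s') i (Finset.mem_insert_of_mem hi)
        (fun hai => hna (hai ▸ hi))

lemma pyth {ι : Type*} (s : Finset ι) (g : ι → H)
    (h : ∀ i ∈ s, ∀ j ∈ s, i ≠ j → ⟪g i, g j⟫ = 0) :
    ‖∑ i ∈ s, g i‖ ^ 2 = ∑ i ∈ s, ‖g i‖ ^ 2 := by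
  have h1 : ⟪∑ i ∈ s, g i, ∑ j ∈ s, g j⟫ = ∑ i ∈ s, ⟪g i, g i⟫ := by
    rw [sum_inner]
    refine Finset.sum_congr rfl fun i hi => ?_
    rw [inner_sum]
    exact Finset.sum_eq_single_of_mem i hi fun j hj hne => h i hi j hj hne.symm
  calc ‖∑ i ∈ s, g i‖ ^ 2 = RCLike.re ⟪∑ i ∈ s, g i, ∑ j ∈ s, g j⟫ :=
        (inner_self_eq_norm_sq _).symm
    _ = ∑ i ∈ s, RCLike.re (⟪g i, g i⟫ : ℂ) := by rw [h1]; exact map_sum _ _ _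
    _ = ∑ i ∈ s, ‖g i‖ ^ 2 := Finset.sum_congr rfl fun i _ => inner_self_eq_norm_sq _

end PVM

namespace PVM
variable {H : Type*} [NormedAddCommGroup H] [InnerProductSpace ℂ H] [CompleteSpace H]

lemma key {ι : Type*} [DecidableEq ι] (E : PVM ℝ H) (s : Finset ι) (f : ι → Set ℝ) (a : ι → ℝ)
    (M : ℝ) (hM : 0 ≤ M)
    (hdisj : ∀ i ∈ s, ∀ j ∈ s, i ≠ j → Disjoint (f i) (f j))
    (ha : ∀ i ∈ s, (f i).Nonempty → |a i| ≤ M) (v : H) :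
    ‖∑ i ∈ s, a i • E.proj (f i) v‖ ≤ M * ‖v‖ := by
  classical
  set s' := s.filter (fun i => (f i).Nonempty) with hs'
  have hsub : s' ⊆ s := Finset.filter_subset _ _
  have hsum : ∑ i ∈ s, a i • E.proj (f i) v = ∑ i ∈ s', a i • E.proj (f i) v := by
    symm
    apply Finset.sum_filter_of_ne
    intro i hi hne
    by_contra hempty
    rw [Set.not_nonempty_iff_eq_empty] at hempty
    exact hne (by rw [hempty, E.empty]; simp)
  rw [hsum]
  have horth : ∀ i ∈ s', ∀ j ∈ s', i ≠ j →
      ⟪a i • E.proj (f i) v, a j • E.proj (f j) v⟫ = 0 := by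
    intro i hi j hj hij
    rw [RCLike.real_smul_eq_coe_smul (K := ℂ), RCLike.real_smul_eq_coe_smul (K := ℂ) (a j),
      inner_smul_left, inner_smul_right, E.orth (hdisj i (hsub hi) j (hsub hj) hij)]
    ring
  have h1 := pyth s' (fun i => a i • E.proj (f i) v) horth
  have h2 : ∀ i ∈ s', ‖a i • E.proj (f i) v‖ ^ 2 ≤ M ^ 2 * ‖E.proj (f i) v‖ ^ 2 := by
    intro i hi
    rw [norm_smul]
    have hai := ha i (hsub hi) ((Finset.mem_filter.mp hi).2)
    have hai' : ‖a i‖ ≤ M := by rwa [Real.norm_eq_abs]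
    have hmm : ‖a i‖ * ‖a i‖ ≤ M * M := mul_le_mul hai' hai' (norm_nonneg _) hM
    nlinarith [norm_nonneg (E.proj (f i) v), norm_nonneg (a i)]
  have h3 : ∑ i ∈ s', ‖E.proj (f i) v‖ ^ 2 ≤ ‖v‖ ^ 2 := by
    have hpy := pyth s' (fun i => E.proj (f i) v) (fun i hi j hj hij =>
      E.orth (hdisj i (hsub hi) j (hsub hj) hij) v v)
    rw [← hpy]
    rw [show ∑ i ∈ s', E.proj (f i) v = E.proj (⋃ i ∈ s', f i) v from
      (E.finset_additive s' f (fun i hi j hj hij => hdisj i (hsub hi) j (hsub hj) hij) v).symm]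
    have h := E.norm_proj_le (⋃ i ∈ s', f i) v
    nlinarith [norm_nonneg (E.proj (⋃ i ∈ s', f i) v), norm_nonneg v]
  have h4 : ‖∑ i ∈ s', a i • E.proj (f i) v‖ ^ 2 ≤ (M * ‖v‖) ^ 2 := by
    rw [h1]
    calc ∑ i ∈ s', ‖a i • E.proj (f i) v‖ ^ 2
        ≤ ∑ i ∈ s', M ^ 2 * ‖E.proj (f i) v‖ ^ 2 := Finset.sum_le_sum h2
      _ = M ^ 2 * ∑ i ∈ s', ‖E.proj (f i) v‖ ^ 2 := (Finset.mul_sum _ _ _).symm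
      _ ≤ M ^ 2 * ‖v‖ ^ 2 := by nlinarith
      _ = (M * ‖v‖) ^ 2 := by ring
  exact (pow_le_pow_iff_left₀ (norm_nonneg _) (mul_nonneg hM (norm_nonneg v))
    (two_ne_zero)).mp h4

lemma expLamN_norm_le (E : PVM ℝ H) {δ b : ℝ} (hb : 0 < b) (hδ : 0 < δ) (N : ℕ)
    {R' : ℝ} (hR' : 0 < R') {v : H} (hv : E.proj (Set.Ico 0 R') v = v) :
    ‖expLamN E δ b N v‖ ≤ Real.exp (δ * bceil b R') * ‖v‖ := by
  classical
  set W := Set.Ico (0 : ℝ) R' with hW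
  set f : ℕ → Set ℝ := fun n =>
    (if n = N + 1 then Set.Ici ((N : ℝ) * b) else Set.Ico (((n : ℝ) - 1) * b) ((n : ℝ) * b)) ∩ W
    with hf
  set a : ℕ → ℝ := fun n =>
    if n = N + 1 then Real.exp (δ * N * b) else Real.exp (δ * n * b) with ha
  have hfN : f (N + 1) = Set.Ici ((N : ℝ) * b) ∩ W := by simp [hf]
  have hfn : ∀ n, n ≠ N + 1 → f n = Set.Ico (((n : ℝ) - 1) * b) ((n : ℝ) * b) ∩ W := by
    intro n hn; simp [hf, hn]
  have haN : a (N + 1) = Real.exp (δ * N * b) := by simp [ha]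
  have han : ∀ n, n ≠ N + 1 → a n = Real.exp (δ * n * b) := by
    intro n hn; simp [ha, hn]
  have hdecomp : ∑ n ∈ Finset.Icc 1 (N + 1), a n • E.proj (f n) v = expLamN E δ b N v := by
    rw [Finset.sum_Icc_succ_top (by omega : 1 ≤ N + 1), expLamN]
    simp only [ContinuousLinearMap.add_apply, ContinuousLinearMap.coe_sum', Finset.sum_apply,
      ContinuousLinearMap.smul_apply]
    congr 1
    · refine Finset.sum_congr rfl fun n hn => ?_
      have hne : n ≠ N + 1 := by have := (Finset.mem_Icc.mp hn).2; omega
      rw [hfn n hne, han n hne, ← E.restrict hv]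
    · rw [hfN, haN, ← E.restrict hv]
  rw [← hdecomp]
  have hRle : R' ≤ bceil b R' := by
    rw [bceil]
    calc R' = (R' / b) * b := by field_simp
      _ ≤ (⌈R' / b⌉₊ : ℝ) * b := by
          apply mul_le_mul_of_nonneg_right (Nat.le_ceil _) hb.le
      _ = b * (⌈R' / b⌉₊ : ℝ) := mul_comm _ _
  have hIcoIci : ∀ n : ℕ, n ≤ N →
      Disjoint (Set.Ico (((n : ℝ) - 1) * b) ((n : ℝ) * b)) (Set.Ici ((N : ℝ) * b)) := by
    intro n hn
    rw [Set.disjoint_left]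
    intro x hx hx'
    have h1 : x < (n : ℝ) * b := hx.2
    have h2 : (N : ℝ) * b ≤ x := hx'
    have : (n : ℝ) ≤ (N : ℝ) := Nat.cast_le.mpr hn
    nlinarith
  apply key E _ f a _ (Real.exp_nonneg _)
  · -- disjointness
    intro i hi j hj hij
    rcases eq_or_ne i (N + 1) with rfl | hiN <;> rcases eq_or_ne j (N + 1) with rfl | hjN
    · exact absurd rfl hij
    · rw [hfN, hfn j hjN]
      apply Set.disjoint_of_subset Set.inter_subset_left Set.inter_subset_left
      exact (hIcoIci j (by have := (Finset.mem_Icc.mp hj).2; omega)).symm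
    · rw [hfN, hfn i hiN]
      apply Set.disjoint_of_subset Set.inter_subset_left Set.inter_subset_left
      exact hIcoIci i (by have := (Finset.mem_Icc.mp hi).2; omega)
    · rw [hfn i hiN, hfn j hjN]
      apply Set.disjoint_of_subset Set.inter_subset_left Set.inter_subset_left
      rw [Set.Ico_disjoint_Ico]
      rcases lt_or_gt_of_ne hij with hlt | hlt
      · have : (i : ℝ) ≤ (j : ℝ) - 1 := by
          have : (i : ℝ) + 1 ≤ (j : ℝ) := by exact_mod_cast Nat.succ_le_of_lt hlt
          linarith
        exact min_le_of_left_le (le_trans (by nlinarith) (le_max_right _ _))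
      · have : (j : ℝ) ≤ (i : ℝ) - 1 := by
          have : (j : ℝ) + 1 ≤ (i : ℝ) := by exact_mod_cast Nat.succ_le_of_lt hlt
          linarith
        exact min_le_of_right_le (le_trans (by nlinarith) (le_max_left _ _))
  · -- coefficient bound
    intro i hi ⟨x, hx⟩
    rcases eq_or_ne i (N + 1) with rfl | hiN
    · rw [hfN] at hx
      rw [haN, abs_of_pos (Real.exp_pos _), Real.exp_le_exp]
      have h1 : (N : ℝ) * b ≤ x := hx.1
      have h2 : x < R' := hx.2.2
      nlinarith
    · rw [hfn i hiN] at hx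
      rw [han i hiN, abs_of_pos (Real.exp_pos _), Real.exp_le_exp]
      have h1 : ((i : ℝ) - 1) * b ≤ x := hx.1.1
      have h2 : x < R' := hx.2.2
      have h4 : (i : ℝ) - 1 < R' / b := by
        rw [lt_div_iff₀ hb]; linarith
      have h5 : (i : ℝ) - 1 < (⌈R' / b⌉₊ : ℝ) := lt_of_lt_of_le h4 (Nat.le_ceil _)
      have h7 : i ≤ ⌈R' / b⌉₊ := by
        have h6 : (i : ℝ) < (⌈R' / b⌉₊ : ℝ) + 1 := by linarith
        have : i < ⌈R' / b⌉₊ + 1 := by exact_mod_cast h6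
        omega
      have h8 : (i : ℝ) * b ≤ bceil b R' := by
        rw [bceil, mul_comm b]
        apply mul_le_mul_of_nonneg_right (Nat.cast_le.mpr h7) hb.le
      nlinarith
end PVM

/-- `e^{Λ(A)}[U, E_A([R,∞))]` is bounded with norm at most
`e^{δ⌈R+b⌉_b} + e^{δ⌈R⌉_b}`; since the commutator has spectral support in a bounded set,
this is expressed as a bound on `e^{Λ_N(A)}[U, E_A([R,∞))]` uniform in `N`. -/
theorem stmt2 {H : Type*} [NormedAddCommGroup H] [InnerProductSpace ℂ H] [CompleteSpace H]
    (U : H →L[ℂ] H) (hU : U ∈ unitary (H →L[ℂ] H))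
    (E : PVM ℝ H) (hpos : E.proj (Set.Iio 0) = 0)
    (b : ℝ) (hb : 0 < b) (hprop : FinitePropagation U E b)
    (δ : ℝ) (hδ : 0 < δ) (R : ℝ) (hR : 0 < R) :
    ∀ (N : ℕ) (ψ : H),
      ‖expLamN E δ b N ((U ∘L E.proj (Set.Ici R) - E.proj (Set.Ici R) ∘L U) ψ)‖ ≤
        (Real.exp (δ * bceil b (R + b)) + Real.exp (δ * bceil b R)) * ‖ψ‖ := by
  intro N ψ
  have hiden : ∀ x : H, x = E.proj (Set.Ico 0 R) x + E.proj (Set.Ici R) x := by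
    intro x
    have h0 : E.proj (Set.Ici (0 : ℝ)) x = x := by
      have h1 := E.add_of_disjoint (Set.Iio_disjoint_Ici (le_refl (0 : ℝ))) x
      rw [Set.Iio_union_Ici, E.univ, hpos] at h1
      simpa using h1.symm
    have h2 := E.add_of_disjoint (S := Set.Ico 0 R) (T := Set.Ici R)
      (Set.disjoint_of_subset Set.Ico_subset_Iio_self subset_rfl
        (Set.Iio_disjoint_Ici (le_refl R))) x
    rw [Set.Ico_union_Ici_eq_Ici hR.le, h0] at h2
    exact h2
  set v1 := E.proj (Set.Ico 0 R) (U (E.proj (Set.Ici R) ψ)) with hv1def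
  set v2 := E.proj (Set.Ici R) (U (E.proj (Set.Ico 0 R) ψ)) with hv2def
  have hcomm : (U ∘L E.proj (Set.Ici R) - E.proj (Set.Ici R) ∘L U) ψ = v1 - v2 := by
    show U (E.proj (Set.Ici R) ψ) - E.proj (Set.Ici R) (U ψ) = v1 - v2
    have e1 : U (E.proj (Set.Ici R) ψ)
        = v1 + E.proj (Set.Ici R) (U (E.proj (Set.Ici R) ψ)) := hiden _
    have e2 : E.proj (Set.Ici R) (U ψ)
        = v2 + E.proj (Set.Ici R) (U (E.proj (Set.Ici R) ψ)) := by
      conv_lhs => rw [hiden ψ]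
      rw [map_add, map_add]
    rw [e1, e2]
    abel
  have hv1 : E.proj (Set.Ico 0 R) v1 = v1 := E.idem _ _
  have hy : E.proj (Set.Ico 0 R) (E.proj (Set.Ico 0 R) ψ) = E.proj (Set.Ico 0 R) ψ := E.idem _ _
  have hp := hprop 0 R hR _ hy
  have hv2' : v2 = E.proj (Set.Ico R (R + b)) (U (E.proj (Set.Ico 0 R) ψ)) := by
    have hset : Set.Ici R ∩ Set.Ico (0 - b) (R + b) = Set.Ico R (R + b) := by
      ext x
      simp only [Set.mem_inter_iff, Set.mem_Ici, Set.mem_Ico]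
      constructor
      · rintro ⟨h1, _, h3⟩; exact ⟨h1, h3⟩
      · rintro ⟨h1, h2⟩; exact ⟨h1, by linarith, h2⟩
    rw [hv2def, E.restrict hp, hset]
  have hv2supp : E.proj (Set.Ico 0 (R + b)) v2 = v2 := by
    conv_lhs => rw [hv2']
    rw [E.proj_proj, Set.inter_eq_self_of_subset_right (Set.Ico_subset_Ico hR.le le_rfl), ← hv2']
  have hUnorm : ∀ x : H, ‖U x‖ = ‖x‖ := by
    intro x
    have h1 : (ContinuousLinearMap.adjoint U) (U x) = x := by
      calc (ContinuousLinearMap.adjoint U) (U x)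
          = (star U * U) x := by rw [ContinuousLinearMap.star_eq_adjoint]; rfl
        _ = x := by rw [hU.1]; rfl
    have h2 : ⟪U x, U x⟫ = ⟪x, x⟫ := by
      rw [← ContinuousLinearMap.adjoint_inner_left U x (U x), h1]
    have h3 : ‖U x‖ ^ 2 = ‖x‖ ^ 2 := by
      rw [← inner_self_eq_norm_sq (𝕜 := ℂ), ← inner_self_eq_norm_sq (𝕜 := ℂ), h2]
    exact le_antisymm
      ((pow_le_pow_iff_left₀ (norm_nonneg _) (norm_nonneg _) two_ne_zero).mp h3.le)
      ((pow_le_pow_iff_left₀ (norm_nonneg _) (norm_nonneg _) two_ne_zero).mp h3.ge)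
  have hnv1 : ‖v1‖ ≤ ‖ψ‖ := by
    refine le_trans (E.norm_proj_le _ _) ?_
    rw [hUnorm]
    exact E.norm_proj_le _ _
  have hnv2 : ‖v2‖ ≤ ‖ψ‖ := by
    refine le_trans (E.norm_proj_le _ _) ?_
    rw [hUnorm]
    exact E.norm_proj_le _ _
  have b1 := E.expLamN_norm_le hb hδ N hR hv1
  have b2 := E.expLamN_norm_le hb hδ N (by linarith : (0 : ℝ) < R + b) hv2supp
  rw [hcomm, map_sub]
  calc ‖expLamN E δ b N v1 - expLamN E δ b N v2‖
      ≤ ‖expLamN E δ b N v1‖ + ‖expLamN E δ b N v2‖ := norm_sub_le _ _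
    _ ≤ Real.exp (δ * bceil b R) * ‖v1‖ + Real.exp (δ * bceil b (R + b)) * ‖v2‖ :=
        add_le_add b1 b2
    _ ≤ Real.exp (δ * bceil b R) * ‖ψ‖ + Real.exp (δ * bceil b (R + b)) * ‖ψ‖ :=
        add_le_add (mul_le_mul_of_nonneg_left hnv1 (Real.exp_nonneg _))
          (mul_le_mul_of_nonneg_left hnv2 (Real.exp_nonneg _))
    _ = (Real.exp (δ * bceil b (R + b)) + Real.exp (δ * bceil b R)) * ‖ψ‖ := by ring
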